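/- Every PTL-definable language L ⊆ Σ* has an R-trivial syntactic monoid; moreover, there exists an integer K > 0 such that (st)^K s ≡_L (st)^K for all strings s, t ∈ Σ*. -/

import Mathlib

/-- PTL formulas over alphabet `α`: atoms, conjunction, negation, and the past operator. -/
inductive PTL (α : Type*) : Type _
  | atom : α → PTL α
  | conj : PTL α → PTL α → PTL α
  | neg : PTL α → PTL α
  | past : PTL α → PTL α

/-- Satisfaction of a PTL formula in string `w` at (1-based) position `n ∈ {1,…,N+1}`. -/
def PTL.Sat {α : Type*} (w : List α) : PTL α → ℕ → Prop
  | .atom a, n => 1 ≤ n ∧ w[n - 1]? = some a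
  | .conj ψ₁ ψ₂, n => PTL.Sat w ψ₁ n ∧ PTL.Sat w ψ₂ n
  | .neg ψ, n => ¬ PTL.Sat w ψ n
  | .past ψ, n => ∃ m, 1 ≤ m ∧ m < n ∧ PTL.Sat w ψ m

/-- A string `w` of length `N` satisfies `ψ` iff `w, N+1 ⊨ ψ`. -/
def PTL.Models {α : Type*} (w : List α) (ψ : PTL α) : Prop :=
  PTL.Sat w ψ (w.length + 1)

/-- A language is PTL-definable if it is the set of strings satisfying some PTL formula. -/
def PTLDefinable {α : Type*} (L : Set (List α)) : Prop :=
  ∃ ψ : PTL α, ∀ w : List α, w ∈ L ↔ PTL.Models w ψ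

/-- `listPow w k` is the `k`-fold concatenation `w^k`. -/
def listPow {α : Type*} (w : List α) : ℕ → List α
  | 0 => []
  | k + 1 => w ++ listPow w k

/-- Syntactic congruence of a language `L`. -/
def SynEquiv {α : Type*} (L : Set (List α)) (s t : List α) : Prop :=
  ∀ u v : List α, u ++ s ++ v ∈ L ↔ u ++ t ++ v ∈ L

/-- The syntactic congruence of `L` as a monoid congruence on the free monoid `Σ*`. -/
def synCon {α : Type*} (L : Set (List α)) : Con (FreeMonoid α) where
  r s t := ∀ u v : FreeMonoid α,
    FreeMonoid.toList (u * s * v) ∈ L ↔ FreeMonoid.toList (u * t * v) ∈ L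
  iseqv := ⟨fun _ _ _ => Iff.rfl, fun h u v => (h u v).symm,
    fun h₁ h₂ u v => (h₁ u v).trans (h₂ u v)⟩
  mul' := by
    intro w x y z hwx hyz u v
    have h₁ := hwx u (y * v)
    have h₂ := hyz (u * x) v
    simp only [mul_assoc] at h₁ h₂ ⊢
    exact h₁.trans h₂

/-- The syntactic monoid of `L`: the quotient of `Σ*` by the syntactic congruence. -/
def SyntacticMonoid {α : Type*} (L : Set (List α)) : Type _ :=
  (synCon L).Quotient

noncomputable instance {α : Type*} (L : Set (List α)) : Monoid (SyntacticMonoid L) :=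
  inferInstanceAs (Monoid (synCon L).Quotient)

/-- A monoid `M` is R-trivial if `sM = tM` implies `s = t`. -/
def RTrivial (M : Type*) [Monoid M] : Prop :=
  ∀ s t : M, Set.range (fun m => s * m) = Set.range (fun m => t * m) → s = t

def ptlSize {α : Type*} : PTL α → ℕ
  | .atom _ => 1
  | .conj a b => ptlSize a + ptlSize b + 1
  | .neg a => ptlSize a + 1
  | .past a => ptlSize a + 1

lemma ptlSize_pos {α : Type*} (χ : PTL α) : 1 ≤ ptlSize χ := by
  cases χ <;> simp [ptlSize] <;> omega

/-- Satisfaction at position `m` only depends on the first `m` letters. -/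
lemma sat_prefix {α : Type*} {w w' : List α} {q : ℕ} (h : ∀ i, i < q → w[i]? = w'[i]?) :
    ∀ (χ : PTL α) (m : ℕ), m ≤ q → (PTL.Sat w χ m ↔ PTL.Sat w' χ m) := by
  intro χ
  induction χ with
  | atom a =>
    intro m hm
    simp only [PTL.Sat]
    constructor <;> rintro ⟨h1, h2⟩ <;> refine ⟨h1, ?_⟩
    · rw [← h (m - 1) (by omega)]; exact h2
    · rw [h (m - 1) (by omega)]; exact h2
  | conj a b iha ihb =>
    intro m hm; exact and_congr (iha m hm) (ihb m hm)
  | neg a iha => intro m hm; exact not_congr (iha m hm)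
  | past a iha =>
    intro m hm
    constructor <;> rintro ⟨m', h1, h2, h3⟩ <;>
      exact ⟨m', h1, h2, by first | exact (iha m' (by omega)).mp h3 | exact (iha m' (by omega)).mpr h3⟩

/-- Shifting a position down by one period inside the periodic region. -/
lemma sat_shift {α : Type*} {w : List α} {p lo hi : ℕ} (hp : 0 < p)
    (hper : ∀ i, lo ≤ i → i + p < hi → w[i]? = w[i + p]?) :
    ∀ (χ : PTL α) (m : ℕ), lo + ptlSize χ * p < m → m ≤ hi →
      (PTL.Sat w χ (m - p) ↔ PTL.Sat w χ m) := by
  intro χ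
  induction χ with
  | atom a =>
    intro m hm1 hm2
    simp only [PTL.Sat, ptlSize] at *
    have hper' := hper (m - p - 1) (by omega) (by omega)
    have : m - p - 1 + p = m - 1 := by omega
    rw [this] at hper'
    constructor <;> rintro ⟨h1, h2⟩ <;> refine ⟨by omega, ?_⟩
    · rw [← hper']; exact h2
    · rw [hper']; exact h2
  | conj a b iha ihb =>
    intro m hm1 hm2
    simp only [ptlSize] at hm1
    have ha := ptlSize_pos a; have hb := ptlSize_pos b
    have h1 : lo + ptlSize a * p < m := by nlinarith
    have h2 : lo + ptlSize b * p < m := by nlinarith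
    exact and_congr (iha m h1 hm2) (ihb m h2 hm2)
  | neg a iha =>
    intro m hm1 hm2
    simp only [ptlSize] at hm1
    have h1 : lo + ptlSize a * p < m := by nlinarith
    exact not_congr (iha m h1 hm2)
  | past a iha =>
    intro m hm1 hm2
    simp only [ptlSize] at hm1
    rw [Nat.add_mul, Nat.one_mul] at hm1
    have ha := ptlSize_pos a
    have hap : p ≤ ptlSize a * p := Nat.le_mul_of_pos_left p (by omega)
    constructor
    · rintro ⟨m', h1, h2, h3⟩
      exact ⟨m', h1, by omega, h3⟩
    · rintro ⟨m', h1, h2, h3⟩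
      by_cases hc : m' < m - p
      · exact ⟨m', h1, hc, h3⟩
      · refine ⟨m' - p, by omega, by omega, ?_⟩
        exact (iha m' (by omega) (by omega)).mpr h3

/-- Core lemma: if `w` and `w'` agree on a prefix of length `A`, agree on suffixes past
`A + ls` (with shift `ls`), and `w` is `p`-periodic on `[lo, A + ls)` with `A = lo + K*p`,
then formulas of size `≤ K` cannot distinguish `w` at `n` from `w'` at `n - ls`. -/
lemma sat_core {α : Type*} {w w' : List α} {p lo A ls K : ℕ} (hp : 0 < p) (hls : ls ≤ p)
    (hA : A = lo + K * p)
    (hpre : ∀ i, i < A → w[i]? = w'[i]?)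
    (hsuf : ∀ i, A + ls ≤ i → w[i]? = w'[i - ls]?)
    (hper : ∀ i, lo ≤ i → i + p < A + ls → w[i]? = w[i + p]?) :
    ∀ (χ : PTL α), ptlSize χ ≤ K → ∀ n, A + ls + 1 ≤ n →
      (PTL.Sat w χ n ↔ PTL.Sat w' χ (n - ls)) := by
  intro χ
  induction χ with
  | atom a =>
    intro hsz n hn
    simp only [PTL.Sat]
    have hKp : p ≤ K * p := Nat.le_mul_of_pos_left p (by simp [ptlSize] at hsz; omega)
    have h := hsuf (n - 1) (by omega)
    have he : n - 1 - ls = n - ls - 1 := by omega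
    rw [he] at h
    constructor <;> rintro ⟨h1, h2⟩ <;> refine ⟨by omega, ?_⟩
    · rw [← h]; exact h2
    · rw [h]; exact h2
  | conj a b iha ihb =>
    intro hsz n hn
    simp only [ptlSize] at hsz
    have ha := ptlSize_pos a; have hb := ptlSize_pos b
    exact and_congr (iha (by omega) n hn) (ihb (by omega) n hn)
  | neg a iha =>
    intro hsz n hn
    simp only [ptlSize] at hsz
    exact not_congr (iha (by omega) n hn)
  | past a iha =>
    intro hsz n hn
    simp only [ptlSize] at hsz
    have ha := ptlSize_pos a
    have hKp : p ≤ K * p := Nat.le_mul_of_pos_left p (by omega)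
    have hap : ptlSize a * p ≤ K * p := Nat.mul_le_mul_right p (by omega)
    constructor
    · rintro ⟨m, h1, h2, h3⟩
      by_cases hc : m ≤ A
      · exact ⟨m, h1, by omega, (sat_prefix hpre a m hc).mp h3⟩
      · by_cases hd : m ≤ A + ls
        · -- middle region: shift down one period, landing in the common prefix
          have h3' : PTL.Sat w a (m - p) :=
            (sat_shift hp hper a m (by omega) (by omega)).mpr h3
          refine ⟨m - p, by omega, by omega, ?_⟩
          exact (sat_prefix hpre a (m - p) (by omega)).mp h3'
        · refine ⟨m - ls, by omega, by omega, ?_⟩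
          exact (iha (by omega) m (by omega)).mp h3
    · rintro ⟨m, h1, h2, h3⟩
      by_cases hc : m ≤ A
      · exact ⟨m, h1, by omega, (sat_prefix hpre a m hc).mpr h3⟩
      · refine ⟨m + ls, by omega, by omega, ?_⟩
        have := (iha (by omega) (m + ls) (by omega)).mpr
        rw [Nat.add_sub_cancel] at this
        exact this h3

lemma listPow_length {α : Type*} (x : List α) (k : ℕ) :
    (listPow x k).length = k * x.length := by
  induction k with
  | zero => simp [listPow]
  | succ k ih => simp [listPow, ih]; ring

lemma listPow_succ' {α : Type*} (x : List α) (k : ℕ) :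
    listPow x (k + 1) = listPow x k ++ x := by
  induction k with
  | zero => simp [listPow]
  | succ k ih => simp only [listPow]; rw [List.append_assoc, ← ih]; rfl

lemma listPow_per {α : Type*} (x : List α) :
    ∀ (n j : ℕ), j + x.length < n * x.length →
      (listPow x n)[j]? = (listPow x n)[j + x.length]? := by
  intro n
  induction n with
  | zero => intro j h; omega
  | succ n ih =>
    intro j h
    rw [show (n + 1) * x.length = n * x.length + x.length from by ring] at h
    have hx : 0 < x.length := by
      rcases Nat.eq_zero_or_pos x.length with h0 | h0
      · rw [h0, Nat.mul_zero] at h; omega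
      · exact h0
    by_cases hj : j < x.length
    · have hn : 1 ≤ n := by
        rcases Nat.eq_zero_or_pos n with h0 | h0
        · subst h0; rw [Nat.zero_mul] at h; omega
        · exact h0
      show (x ++ listPow x n)[j]? = (x ++ listPow x n)[j + x.length]?
      rw [List.getElem?_append_left hj, List.getElem?_append_right (by omega),
        Nat.add_sub_cancel]
      obtain ⟨m, rfl⟩ : ∃ m, n = m + 1 := ⟨n - 1, by omega⟩
      show x[j]? = (x ++ listPow x m)[j]?
      rw [List.getElem?_append_left hj]
    · have hj' : x.length ≤ j := by omega
      show (x ++ listPow x n)[j]? = (x ++ listPow x n)[j + x.length]?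
      rw [List.getElem?_append_right hj', List.getElem?_append_right (by omega)]
      have h1 : j + x.length - x.length = (j - x.length) + x.length := by omega
      rw [h1]
      apply ih
      omega

/-- The main simulation lemma instantiated to `u ⬝ (st)^K ⬝ s ⬝ v` versus `u ⬝ (st)^K ⬝ v`. -/
lemma sat_inst {α : Type*} (u s t v : List α) (K : ℕ) (hp : 0 < s.length + t.length)
    (χ : PTL α) (hsz : ptlSize χ ≤ K) (n : ℕ)
    (hn : u.length + K * (s.length + t.length) + s.length + 1 ≤ n) :
    (PTL.Sat (u ++ listPow (s ++ t) K ++ s ++ v) χ n ↔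
     PTL.Sat (u ++ listPow (s ++ t) K ++ v) χ (n - s.length)) := by
  set p := s.length + t.length with hpdef
  set A := u.length + K * p with hAdef
  have lenP : (listPow (s ++ t) K).length = K * p := by
    rw [listPow_length, List.length_append]
  have lenUP : (u ++ listPow (s ++ t) K).length = A := by
    rw [List.length_append, lenP]
  have lenUPs : (u ++ listPow (s ++ t) K ++ s).length = A + s.length := by
    rw [List.length_append, lenUP]
  refine sat_core (w := u ++ listPow (s ++ t) K ++ s ++ v)
    (w' := u ++ listPow (s ++ t) K ++ v) (p := p) (lo := u.length) (A := A)
    (ls := s.length) (K := K) hp (by omega) rfl ?_ ?_ ?_ χ hsz n hn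
  · intro i hi
    rw [List.getElem?_append_left (by omega : i < (u ++ listPow (s ++ t) K ++ s).length),
      List.getElem?_append_left (by omega : i < (u ++ listPow (s ++ t) K).length),
      List.getElem?_append_left (by omega : i < (u ++ listPow (s ++ t) K).length)]
  · intro i hi
    rw [List.getElem?_append_right (by omega : (u ++ listPow (s ++ t) K ++ s).length ≤ i),
      List.getElem?_append_right (by omega : (u ++ listPow (s ++ t) K).length ≤ i - s.length)]
    congr 1
    omega
  · intro i hi1 hi2
    have key : ∀ j, u.length ≤ j → j < A + s.length →
        (u ++ listPow (s ++ t) K ++ s ++ v)[j]? =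
          (u ++ listPow (s ++ t) (K + 1))[j]? := by
      intro j hj1 hj2
      rw [List.getElem?_append_left (by omega : j < (u ++ listPow (s ++ t) K ++ s).length)]
      have hMt : u ++ listPow (s ++ t) (K + 1) = (u ++ listPow (s ++ t) K ++ s) ++ t := by
        rw [listPow_succ']
        simp [List.append_assoc]
      rw [hMt, List.getElem?_append_left (by omega : j < (u ++ listPow (s ++ t) K ++ s).length)]
    rw [key i hi1 (by omega), key (i + p) (by omega) (by omega)]
    have lenQ : (listPow (s ++ t) (K + 1)).length = (K + 1) * p := by
      rw [listPow_length, List.length_append]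
    rw [List.getElem?_append_right (by omega : u.length ≤ i),
      List.getElem?_append_right (by omega : u.length ≤ i + p)]
    have h1 : i + p - u.length = (i - u.length) + p := by omega
    rw [h1]
    have hst : (s ++ t).length = p := List.length_append (as := s) (bs := t)
    have hKp1 : (K + 1) * p = K * p + p := by ring
    have hper := listPow_per (s ++ t) (K + 1) (i - u.length) (by rw [hst]; omega)
    rw [hst] at hper
    exact hper

lemma synEquiv_of_ptl {α : Type*} (L : Set (List α)) (ψ : PTL α)
    (hψ : ∀ w : List α, w ∈ L ↔ PTL.Models w ψ) (s t : List α) :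
    SynEquiv L (listPow (s ++ t) (ptlSize ψ) ++ s) (listPow (s ++ t) (ptlSize ψ)) := by
  intro u v
  set K := ptlSize ψ with hK
  rcases Nat.eq_zero_or_pos (s.length + t.length) with hp | hp
  · have hs : s = [] := List.eq_nil_of_length_eq_zero (by omega)
    rw [hs, List.append_nil]
  · rw [hψ, hψ]
    unfold PTL.Models
    have e1 : u ++ (listPow (s ++ t) K ++ s) ++ v = u ++ listPow (s ++ t) K ++ s ++ v := by
      simp [List.append_assoc]
    have e2 : u ++ listPow (s ++ t) K ++ v = u ++ listPow (s ++ t) K ++ v := rfl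
    rw [e1]
    have hlen1 : (u ++ listPow (s ++ t) K ++ s ++ v).length
        = u.length + K * (s.length + t.length) + s.length + v.length := by
      simp [listPow_length]; ring
    have hlen2 : (u ++ listPow (s ++ t) K ++ v).length
        = u.length + K * (s.length + t.length) + v.length := by
      simp [listPow_length]; ring
    have hpos : (u ++ listPow (s ++ t) K ++ v).length + 1
        = (u ++ listPow (s ++ t) K ++ s ++ v).length + 1 - s.length := by
      rw [hlen1, hlen2]; omega
    rw [hpos]
    exact sat_inst u s t v K hp ψ le_rfl _ (by rw [hlen1]; omega)

lemma synCon_of_synEquiv {α : Type*} {L : Set (List α)} {x y : List α}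
    (h : SynEquiv L x y) :
    (synCon L) (FreeMonoid.ofList x) (FreeMonoid.ofList y) := by
  show ∀ u v : FreeMonoid α, _
  intro u v
  have h2 := h (FreeMonoid.toList u) (FreeMonoid.toList v)
  simpa [FreeMonoid.toList_mul, FreeMonoid.toList_ofList, List.append_assoc] using h2

lemma ofList_listPow {α : Type*} (x : List α) (k : ℕ) :
    FreeMonoid.ofList (listPow x k) = (FreeMonoid.ofList x) ^ k := by
  induction k with
  | zero => simp [listPow, FreeMonoid.ofList_nil]
  | succ k ih =>
    show FreeMonoid.ofList (x ++ listPow x k) = _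
    rw [FreeMonoid.ofList_append, ih, pow_succ']

lemma rtrivial_aux {α : Type*} (L : Set (List α)) (K : ℕ)
    (hid : ∀ s t : List α, SynEquiv L (listPow (s ++ t) K ++ s) (listPow (s ++ t) K)) :
    RTrivial (synCon L).Quotient := by
  intro S T hrange
  obtain ⟨A, hA⟩ : ∃ A, T * A = S := by
    have h1 : S ∈ Set.range fun m => S * m := ⟨1, mul_one S⟩
    rw [hrange] at h1; exact h1
  obtain ⟨B, hB⟩ : ∃ B, S * B = T := by
    have h1 : T ∈ Set.range fun m => T * m := ⟨1, mul_one T⟩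
    rw [← hrange] at h1; exact h1
  obtain ⟨a, rfl⟩ := Con.mk'_surjective (c := synCon L) A
  obtain ⟨b, rfl⟩ := Con.mk'_surjective (c := synCon L) B
  set f := Con.mk' (synCon L) with hf
  have hcon : (synCon L) ((b * a) ^ K * b) ((b * a) ^ K) := by
    have h := synCon_of_synEquiv (hid (FreeMonoid.toList b) (FreeMonoid.toList a))
    have eL : FreeMonoid.ofList
        (listPow (FreeMonoid.toList b ++ FreeMonoid.toList a) K ++ FreeMonoid.toList b)
        = (b * a) ^ K * b := by
      rw [FreeMonoid.ofList_append, ← FreeMonoid.toList_mul, ofList_listPow,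
        FreeMonoid.ofList_toList, FreeMonoid.ofList_toList]
    have eR : FreeMonoid.ofList
        (listPow (FreeMonoid.toList b ++ FreeMonoid.toList a) K)
        = (b * a) ^ K := by
      rw [← FreeMonoid.toList_mul, ofList_listPow, FreeMonoid.ofList_toList]
    rwa [eL, eR] at h
  have hkey : f ((b * a) ^ K * b) = f ((b * a) ^ K) := (Con.eq (synCon L)).mpr hcon
  have hcollapse : (f b * f a) ^ K * f b = (f b * f a) ^ K := by
    rw [← map_mul, ← map_pow, ← map_mul, hkey, map_pow, map_mul]
  have hstep : S = S * (f b * f a) := by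
    rw [← mul_assoc, hB, hA]
  have hpow : ∀ k, S = S * (f b * f a) ^ k := by
    intro k
    induction k with
    | zero => simp
    | succ k ih => rw [pow_succ', ← mul_assoc, ← hstep]; exact ih
  have hTS : T = S := by
    calc T = S * f b := hB.symm
      _ = S * (f b * f a) ^ K * f b := by rw [← hpow K]
      _ = S * ((f b * f a) ^ K * f b) := by rw [mul_assoc]
      _ = S * (f b * f a) ^ K := by rw [hcollapse]
      _ = S := (hpow K).symm
  exact hTS.symm

/-- Every PTL-definable language has an R-trivial syntactic monoid;
moreover there is `K > 0` with `(st)^K s ≡_L (st)^K` for all strings `s, t`. -/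
theorem ptl_definable_rtrivial {α : Type*} [Fintype α] (L : Set (List α))
    (hL : PTLDefinable L) :
    RTrivial (SyntacticMonoid L) ∧
    ∃ K : ℕ, 0 < K ∧ ∀ s t : List α, SynEquiv L (listPow (s ++ t) K ++ s) (listPow (s ++ t) K) := by
  obtain ⟨ψ, hψ⟩ := hL
  have hid : ∀ s t : List α,
      SynEquiv L (listPow (s ++ t) (ptlSize ψ) ++ s) (listPow (s ++ t) (ptlSize ψ)) :=
    synEquiv_of_ptl L ψ hψ
  exact ⟨rtrivial_aux L (ptlSize ψ) hid, ptlSize ψ, ptlSize_pos ψ, hid⟩
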